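/- For each integer g ≥ 1, let LT_g(x) = x^{2g} − x^{g+1} − x^g − x^{g−1} + 1 and let λ_g = |LT_g| be its house. Then the genus-normalized values converge: lim_{g→∞} (λ_g)^g = (3 + √5)/2, i.e. one plus the golden mean. -/

import Mathlib

open Polynomial

noncomputable section

/-- The Lanneau–Thiffeault polynomial `LT_g(x) = x^{2g} − x^{g+1} − x^g − x^{g−1} + 1`. -/
def LTpoly (g : ℕ) : Polynomial ℤ :=
  Polynomial.X ^ (2 * g) - Polynomial.X ^ (g + 1) - Polynomial.X ^ g
    - Polynomial.X ^ (g - 1) + 1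

/-- The house of an integer polynomial: the maximum of `|z|` over its complex
roots `z`. -/
def house (p : Polynomial ℤ) : ℝ :=
  sSup ((fun z : ℂ => ‖z‖) '' {z : ℂ | (p.map (Int.castRingHom ℂ)).IsRoot z})

local notation "ρ" => (3 + Real.sqrt 5) / 2

private lemma LT15.c_sq : ρ * ρ = 3 * ρ - 1 := by
  have h5 : Real.sqrt 5 ^ 2 = 5 := Real.sq_sqrt (by norm_num)
  nlinarith [h5]

private lemma LT15.c_ge : (5:ℝ)/2 ≤ ρ := by
  have : (2:ℝ) ≤ Real.sqrt 5 := by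
    rw [show (2:ℝ) = Real.sqrt 4 by rw [show (4:ℝ) = 2^2 by norm_num, Real.sqrt_sq]; norm_num]
    exact Real.sqrt_le_sqrt (by norm_num)
  linarith

private lemma LT15.c_le : ρ ≤ 3 := by
  have : Real.sqrt 5 ≤ 3 := by
    rw [show (3:ℝ) = Real.sqrt 9 by rw [show (9:ℝ) = 3^2 by norm_num, Real.sqrt_sq]; norm_num]
    exact Real.sqrt_le_sqrt (by norm_num)
  linarith

private lemma LT15.root_iff (g : ℕ) (z : ℂ) :
    ((LTpoly g).map (Int.castRingHom ℂ)).IsRoot z ↔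
      z ^ (2*g) - z ^ (g+1) - z ^ g - z ^ (g-1) + 1 = 0 := by
  simp [LTpoly, Polynomial.IsRoot, Polynomial.map_sub, Polynomial.map_add,
    Polynomial.map_pow, Polynomial.map_one, Polynomial.map_X]

private lemma LT15.LT_ne (m : ℕ) : (LTpoly (m+2)).map (Int.castRingHom ℂ) ≠ 0 := by
  intro h
  have h0 : ((LTpoly (m+2)).map (Int.castRingHom ℂ)).IsRoot 0 := by simp [h]
  rw [LT15.root_iff] at h0
  simp [zero_pow, Nat.mul_ne_zero] at h0

/-- The quadratic step: if `σ = w + w⁻¹` with `σ` close to the real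
interval `[-3,3]` and `|w| ≥ ρ`, then `|w| ≤ ρ + 8δ`. -/
private lemma LT15.quad_step (w σ : ℂ) (δ : ℝ) (hδ0 : 0 < δ) (hδ1 : δ ≤ 1/40)
    (heq : σ = w + w⁻¹)
    (hIm : |σ.im| ≤ 3*δ) (habs : ‖σ‖ ≤ 3 + δ)
    (hR : ρ ≤ ‖w‖) : ‖w‖ ≤ ρ + 8*δ := by
  set R := ‖w‖ with hRdef
  set x := w.re
  set y := w.im
  have hns : Complex.normSq w = R^2 := by
    rw [← Complex.sq_norm]
  have hxy : x^2 + y^2 = R^2 := by rw [← hns]; simp [Complex.normSq_apply, x, y, sq]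
  have hRpos : (0:ℝ) < R := by have := LT15.c_ge; linarith
  have hR2 : (5:ℝ)/2 ≤ R := le_trans LT15.c_ge hR
  have hImσ : σ.im = y * (R^2 - 1) / R^2 := by
    rw [heq]; simp [Complex.add_im, Complex.inv_im, hns, y]
    field_simp
    ring
  have hReσ : σ.re = x * (R^2 + 1) / R^2 := by
    rw [heq]; simp [Complex.add_re, Complex.inv_re, hns, x]
    field_simp
  have hRe_le : |σ.re| ≤ 3 + δ := le_trans (Complex.abs_re_le_norm σ) habs
  have hy : |y| * (R^2 - 1) ≤ 3*δ*R^2 := by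
    have h1 : |y * (R^2-1) / R^2| ≤ 3*δ := by rw [← hImσ]; exact hIm
    rw [abs_div, abs_mul, abs_of_nonneg (by nlinarith : (0:ℝ) ≤ R^2 - 1),
      abs_of_nonneg (by positivity : (0:ℝ) ≤ R^2), div_le_iff₀ (by positivity)] at h1
    linarith [h1]
  have hx : |x| * (R^2 + 1) ≤ (3+δ)*R^2 := by
    have h1 : |x * (R^2+1) / R^2| ≤ 3+δ := by rw [← hReσ]; exact hRe_le
    rw [abs_div, abs_mul, abs_of_nonneg (by nlinarith : (0:ℝ) ≤ R^2 + 1),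
      abs_of_nonneg (by positivity : (0:ℝ) ≤ R^2), div_le_iff₀ (by positivity)] at h1
    linarith [h1]
  clear_value R x y
  clear hns hImσ hReσ hIm habs heq hRdef
  have key : (R^2+1)^2 ≤ ((3+2*δ)*R)^2 := by
    have hy2 : y^2 * (R^2-1)^2 ≤ 9*δ^2*R^4 := by
      have := mul_le_mul hy hy (mul_nonneg (abs_nonneg y) (by nlinarith)) (by nlinarith)
      calc y^2*(R^2-1)^2 = ( |y| * (R^2-1)) * ( |y| * (R^2-1)) := by
            rw [← sq_abs y]; ring
        _ ≤ (3*δ*R^2)*(3*δ*R^2) := this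
        _ = 9*δ^2*R^4 := by ring
    have hx2 : x^2 * (R^2+1)^2 ≤ (3+δ)^2*R^4 := by
      have := mul_le_mul hx hx (by positivity) (by nlinarith)
      calc x^2*(R^2+1)^2 = ( |x| * (R^2+1)) * ( |x| * (R^2+1)) := by
            rw [← sq_abs x]; ring
        _ ≤ ((3+δ)*R^2)*((3+δ)*R^2) := this
        _ = (3+δ)^2*R^4 := by ring
    have hu : (25:ℝ)/4 ≤ R^2 := by nlinarith
    have hcmp : (R^2+1)^2 ≤ 4*(R^2-1)^2 := by
      nlinarith [mul_nonneg (by linarith : (0:ℝ) ≤ 3*R^2-1) (by linarith : (0:ℝ) ≤ R^2-3)]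
    have hy3 : y^2 * (R^2+1)^2 ≤ 36*δ^2*R^4 := by
      calc y^2 * (R^2+1)^2 ≤ y^2 * (4*(R^2-1)^2) :=
            mul_le_mul_of_nonneg_left hcmp (sq_nonneg y)
        _ = 4*(y^2*(R^2-1)^2) := by ring
        _ ≤ 4*(9*δ^2*R^4) := by linarith
        _ = 36*δ^2*R^4 := by ring
    have hsum : R^2 * (R^2+1)^2 ≤ ((3+δ)^2 + 36*δ^2)*R^4 := by
      calc R^2 * (R^2+1)^2 = x^2*(R^2+1)^2 + y^2*(R^2+1)^2 := by rw [← hxy]; ring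
        _ ≤ (3+δ)^2*R^4 + 36*δ^2*R^4 := by linarith
        _ = ((3+δ)^2 + 36*δ^2)*R^4 := by ring
    have hco : ((3+δ)^2 + 36*δ^2) ≤ (3+2*δ)^2 := by nlinarith
    have h2 : R^2 * (R^2+1)^2 ≤ R^2 * ((3+2*δ)^2 * R^2) := by
      calc R^2 * (R^2+1)^2 ≤ ((3+δ)^2 + 36*δ^2)*R^4 := hsum
        _ ≤ (3+2*δ)^2*R^4 := mul_le_mul_of_nonneg_right hco (by positivity)
        _ = R^2 * ((3+2*δ)^2 * R^2) := by ring
    have h3 := le_of_mul_le_mul_left h2 (by positivity : (0:ℝ) < R^2)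
    calc (R^2+1)^2 ≤ (3+2*δ)^2 * R^2 := h3
      _ = ((3+2*δ)*R)^2 := by ring
  have key2 : R^2 + 1 ≤ (3+2*δ)*R := by
    have h1 := Real.sqrt_le_sqrt key
    rw [Real.sqrt_sq (by positivity), Real.sqrt_sq (by positivity)] at h1
    exact h1
  by_contra hcon
  push_neg at hcon
  have hcsq := LT15.c_sq
  have hcge := LT15.c_ge
  have hk : (0:ℝ) < (R - (ρ+8*δ)) * (R + (ρ+8*δ) - (3+2*δ)) :=
    mul_pos (by linarith) (by linarith)
  have e2 : (R - (ρ+8*δ)) * (R + (ρ+8*δ) - (3+2*δ))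
      = R^2 - (3+2*δ)*R - ((ρ+8*δ)^2 - (3+2*δ)*(ρ+8*δ)) := by ring
  have e3 : (ρ+8*δ)^2 - (3+2*δ)*(ρ+8*δ) + 1
      = δ*(14*ρ - 24 + 48*δ) + (ρ*ρ - 3*ρ + 1) := by ring
  have e4 : (0:ℝ) ≤ δ*(14*ρ - 24 + 48*δ) :=
    mul_nonneg hδ0.le (by linarith)
  rw [e2] at hk
  linarith [key2]

private lemma LT15.sigma_im (z : ℂ) (δ : ℝ) (hδ0 : 0 < δ) (hδ1 : δ ≤ 1)
    (hr1 : 1 < ‖z‖) (hrδ : ‖z‖ ≤ 1 + δ) :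
    |(z + 1 + z⁻¹).im| ≤ 3*δ := by
  set r := ‖z‖ with hr
  have hn : Complex.normSq z = r^2 := by rw [← Complex.sq_norm]
  have him : (z + 1 + z⁻¹).im = z.im * (r^2 - 1) / r^2 := by
    simp [Complex.add_im, Complex.inv_im, hn]
    field_simp
    ring
  rw [him, abs_div, abs_mul]
  have h1 : |z.im| ≤ r := Complex.abs_im_le_norm z
  have h2 : |r^2 - 1| = r^2 - 1 := abs_of_nonneg (by nlinarith)
  have h3 : |r^2| = r^2 := abs_of_nonneg (by positivity)
  rw [h2, h3, div_le_iff₀ (by positivity)]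
  have hrn : r ≤ r^2 := by nlinarith
  nlinarith [abs_nonneg z.im]

private lemma LT15.sigma_abs (z : ℂ) (δ : ℝ) (hr1 : 1 < ‖z‖)
    (hrδ : ‖z‖ ≤ 1 + δ) : ‖z + 1 + z⁻¹‖ ≤ 3 + δ := by
  have h1 := norm_add_le (z + 1) z⁻¹
  have h2 := norm_add_le z 1
  rw [norm_inv] at h1
  have h3 : (‖z‖)⁻¹ ≤ 1 := by
    rw [inv_le_one_iff₀]; right; linarith
  simp only [norm_one] at h2
  linarith

private lemma LT15.sigma_eq (m : ℕ) (z : ℂ) (hz0 : z ≠ 0)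
    (hroot : z ^ (2*(m+2)) - z ^ (m+3) - z ^ (m+2) - z ^ (m+1) + 1 = 0) :
    z + 1 + z⁻¹ = z^(m+2) + (z^(m+2))⁻¹ := by
  set w := z^(m+2) with hwdef
  have hw0 : w ≠ 0 := pow_ne_zero _ hz0
  have e1 : z ^ (2*(m+2)) = w^2 := by rw [hwdef, ← pow_mul, mul_comm]
  have e2 : z ^ (m+3) = w * z := by rw [hwdef, ← pow_succ]
  have e3 : z ^ (m+1) * z = w := by rw [hwdef, ← pow_succ]
  rw [e1, e2] at hroot
  have hz : z⁻¹ * z = 1 := inv_mul_cancel₀ hz0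
  have hw : w⁻¹ * w = 1 := inv_mul_cancel₀ hw0
  have key : (z + 1 + z⁻¹) * (z * w) = (w + w⁻¹) * (z * w) := by
    calc (z + 1 + z⁻¹) * (z * w) = z*z*w + z*w + (z⁻¹*z)*w := by ring
      _ = z*z*w + z*w + w := by rw [hz]; ring
      _ = w*w*z + (1:ℂ)*z := by linear_combination (-z)*hroot + e3
      _ = w*w*z + (w⁻¹*w)*z := by rw [hw]
      _ = (w + w⁻¹) * (z * w) := by ring
  exact mul_right_cancel₀ (mul_ne_zero hz0 hw0) key

private lemma LT15.crude (m : ℕ) (δ : ℝ) (z : ℂ) (hδ0 : 0 < δ)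
    (h4 : 4 ≤ (1+δ)^(m+1))
    (hroot : z ^ (2*(m+2)) - z ^ (m+3) - z ^ (m+2) - z ^ (m+1) + 1 = 0)
    (hr1 : 1 < ‖z‖) : ‖z‖ ≤ 1 + δ := by
  set r := ‖z‖ with hr
  by_contra hcon
  push_neg at hcon
  have heq : z ^ (2*(m+2)) = z ^ (m+3) + z ^ (m+2) + z ^ (m+1) - 1 := by
    linear_combination hroot
  have htri : r ^ (2*(m+2)) ≤ r^(m+3) + r^(m+2) + r^(m+1) + 1 := by
    calc r ^ (2*(m+2)) = ‖z ^ (m+3) + z ^ (m+2) + z ^ (m+1) - 1‖ := by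
          rw [← heq, norm_pow]
      _ ≤ r^(m+3) + r^(m+2) + r^(m+1) + 1 := by
          calc ‖z ^ (m+3) + z ^ (m+2) + z ^ (m+1) - 1‖
              ≤ ‖z ^ (m+3) + z ^ (m+2) + z ^ (m+1)‖ + 1 := by
                simpa using norm_sub_le (z ^ (m+3) + z ^ (m+2) + z ^ (m+1)) 1
            _ ≤ r^(m+3) + r^(m+2) + r^(m+1) + 1 := by
                have := norm_add_le (z ^ (m+3) + z ^ (m+2)) (z ^ (m+1))
                have := norm_add_le (z ^ (m+3)) (z ^ (m+2))
                simp only [norm_pow] at *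
                linarith
  have hr0 : (0:ℝ) < r := by linarith
  have hmono : ∀ i j : ℕ, i ≤ j → r^i ≤ r^j := fun i j h => pow_le_pow_right₀ (by linarith) h
  have h1 : r ^ (2*(m+2)) ≤ 4 * r^(m+3) := by
    have a1 := hmono (m+2) (m+3) (by omega)
    have a2 := hmono (m+1) (m+3) (by omega)
    have a3 := hmono 0 (m+3) (by omega)
    simp at a3
    linarith
  have h2 : r ^ (2*(m+2)) = r^(m+3) * r^(m+1) := by rw [← pow_add]; ring_nf
  have h3 : r^(m+1) ≤ 4 := by
    have hp : (0:ℝ) < r^(m+3) := by positivity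
    rw [h2] at h1
    exact le_of_mul_le_mul_left (by linarith : r^(m+3) * r^(m+1) ≤ r^(m+3) * 4) hp
  have h5 : (1+δ)^(m+1) < r^(m+1) := by
    apply pow_lt_pow_left₀ hcon (by linarith) (by omega)
  linarith

/-- Any root of `LT_{m+2}` satisfies `|z|^(m+2) ≤ ρ + 8δ` once `(1+δ)^(m+1) ≥ 4`. -/
private lemma LT15.root_pow_le (m : ℕ) (δ : ℝ) (hδ0 : 0 < δ) (hδ1 : δ ≤ 1/40)
    (h4 : 4 ≤ (1+δ)^(m+1)) (z : ℂ)
    (hroot : z ^ (2*(m+2)) - z ^ (m+3) - z ^ (m+2) - z ^ (m+1) + 1 = 0) :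
    (‖z‖) ^ (m+2) ≤ ρ + 8*δ := by
  have hcge := LT15.c_ge
  by_cases habs1 : ‖z‖ ≤ 1
  · have := pow_le_one₀ (by positivity : (0:ℝ) ≤ ‖z‖) habs1 (n := m+2)
    linarith
  · push_neg at habs1
    have hz0 : z ≠ 0 := by
      intro h
      rw [h] at hroot
      simp [zero_pow, Nat.mul_ne_zero] at hroot
    have hrδ : ‖z‖ ≤ 1 + δ := LT15.crude m δ z hδ0 h4 hroot habs1
    have hIm := LT15.sigma_im z δ hδ0 (by linarith) habs1 hrδ
    have habsσ := LT15.sigma_abs z δ habs1 hrδ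
    have heq := LT15.sigma_eq m z hz0 hroot
    have hRw : ‖z^(m+2)‖ = (‖z‖)^(m+2) := norm_pow _ _
    by_cases hR : ρ ≤ ‖z^(m+2)‖
    · have := LT15.quad_step (z^(m+2)) (z + 1 + z⁻¹) δ hδ0 hδ1 heq hIm habsσ hR
      rw [hRw] at this
      exact this
    · push_neg at hR
      rw [hRw] at hR
      linarith

private lemma LT15.exists_real_root (m : ℕ) :
    ∃ x : ℝ, 1 < x ∧ ρ ≤ x ^ (m+2) ∧
      x ^ (2*(m+2)) - x ^ (m+3) - x ^ (m+2) - x ^ (m+1) + 1 = 0 := by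
  set g : ℕ := m + 2 with hg
  set a : ℝ := ρ ^ ((g:ℝ)⁻¹) with ha
  have hρ1 : (1:ℝ) < ρ := by linarith [LT15.c_ge]
  have hgpos : (0:ℝ) < (g:ℝ) := by positivity
  have ha1 : 1 < a := by
    rw [ha]
    exact Real.one_lt_rpow_iff_of_pos (by linarith) |>.2 (Or.inl ⟨hρ1, inv_pos.2 hgpos⟩)
  have hag : a ^ g = ρ := by
    rw [ha, ← Real.rpow_natCast (ρ ^ ((g:ℝ)⁻¹)) g, ← Real.rpow_mul (by linarith),
      inv_mul_cancel₀ (ne_of_gt hgpos), Real.rpow_one]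
  have ha3 : a ≤ 3 := by
    calc a ≤ ρ ^ (1:ℝ) := by
          rw [ha]
          apply Real.rpow_le_rpow_of_exponent_le (le_of_lt hρ1)
          rw [inv_le_one_iff₀]; right
          have h1g : (1:ℕ) ≤ g := by omega
          exact_mod_cast h1g
      _ = ρ := Real.rpow_one _
      _ ≤ 3 := LT15.c_le
  set f : ℝ → ℝ := fun x => x ^ (2*g) - x ^ (g+1) - x ^ g - x ^ (g-1) + 1 with hf
  have hcont : ContinuousOn f (Set.Icc a 3) := by fun_prop
  have hfa : f a ≤ 0 := by
    have h2g : a ^ (2*g) = ρ^2 := by rw [pow_mul', hag]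
    have hg1 : a ^ (g+1) = ρ * a := by rw [pow_succ, hag]
    have hgm : a ^ (g-1) * a = ρ := by
      rw [← pow_succ]
      have : g - 1 + 1 = g := by omega
      rw [this, hag]
    have hapos : (0:ℝ) < a := by linarith
    have hgm' : a ^ (g-1) = ρ / a := by rw [eq_div_iff hapos.ne', hgm]
    have hcs := LT15.c_sq
    simp only [hf, h2g, hg1, hag, hgm']
    have hdiv : a * (ρ / a) = ρ := by field_simp
    by_contra hpos
    push_neg at hpos
    have h0 := mul_pos hapos hpos
    nlinarith [hdiv, hcs, mul_nonneg (by linarith [LT15.c_ge] : (0:ℝ) ≤ ρ) (sq_nonneg (a-1))]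
  have hf3 : 0 ≤ f 3 := by
    set t : ℝ := 3 ^ g with ht'
    have hs : 3 * (3:ℝ)^(g-1) = t := by
      have hgg : g - 1 + 1 = g := by omega
      rw [ht', mul_comm, ← pow_succ, hgg]
    have ht : (9:ℝ) ≤ t := by
      rw [ht']
      calc (9:ℝ) = 3^2 := by norm_num
        _ ≤ 3^g := pow_le_pow_right₀ (by norm_num) (by omega)
    have h2g : (3:ℝ) ^ (2*g) = t^2 := by rw [pow_mul', ht']
    have hg1 : (3:ℝ) ^ (g+1) = t * 3 := by rw [pow_succ, ht']
    have htt : t * 9 ≤ t * t := mul_le_mul_of_nonneg_left ht (by positivity)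
    simp only [hf, h2g, hg1]
    nlinarith [htt, hs, ht]
  have hmem : (0:ℝ) ∈ Set.Icc (f a) (f 3) := ⟨hfa, hf3⟩
  obtain ⟨x, hx, hfx⟩ := intermediate_value_Icc (le_trans (le_refl a) ha3) hcont hmem
  refine ⟨x, by linarith [hx.1, ha1], ?_, ?_⟩
  · calc ρ = a ^ g := hag.symm
      _ ≤ x ^ g := pow_le_pow_left₀ (by linarith) hx.1 g
  · have hgsub : g - 1 = m + 1 := by omega
    have h := hfx
    simp only [hf, hgsub] at h
    exact h

/-- Key two-sided bound on `house (LTpoly (m+2)) ^ (m+2)`. -/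
private lemma LT15.house_bound (m : ℕ) (δ : ℝ) (hδ0 : 0 < δ) (hδ1 : δ ≤ 1/40)
    (h4 : 4 ≤ (1+δ)^(m+1)) :
    ρ ≤ house (LTpoly (m+2)) ^ (m+2) ∧ house (LTpoly (m+2)) ^ (m+2) ≤ ρ + 8*δ := by
  set S : Set ℝ :=
    (fun z : ℂ => ‖z‖) '' {z : ℂ | ((LTpoly (m+2)).map (Int.castRingHom ℂ)).IsRoot z} with hS
  have hfin : S.Finite :=
    Set.Finite.image _ (Polynomial.finite_setOf_isRoot (LT15.LT_ne m))
  obtain ⟨x, hx1, hxρ, hxroot⟩ := LT15.exists_real_root m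
  have hxmem : x ∈ S := by
    refine ⟨(x:ℂ), ?_, ?_⟩
    · rw [Set.mem_setOf_eq, LT15.root_iff]
      exact_mod_cast hxroot
    · show ‖(x:ℂ)‖ = x
      rw [Complex.norm_real, Real.norm_eq_abs, abs_of_nonneg (by linarith)]
  have hne : S.Nonempty := ⟨x, hxmem⟩
  have hbdd : BddAbove S := hfin.bddAbove
  have hhouse : house (LTpoly (m+2)) = sSup S := rfl
  have hsup_mem : sSup S ∈ S := hne.csSup_mem hfin
  constructor
  · have hxle : x ≤ sSup S := le_csSup hbdd hxmem
    calc ρ ≤ x ^ (m+2) := hxρ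
      _ ≤ (sSup S) ^ (m+2) := pow_le_pow_left₀ (by linarith) hxle _
      _ = house (LTpoly (m+2)) ^ (m+2) := by rw [hhouse]
  · obtain ⟨z₀, hz₀, habsz₀⟩ := hsup_mem
    rw [Set.mem_setOf_eq, LT15.root_iff] at hz₀
    rw [hhouse, ← habsz₀]
    exact LT15.root_pow_le m δ hδ0 hδ1 h4 z₀ hz₀

theorem stmt_15 :
    Filter.Tendsto (fun g : ℕ => (house (LTpoly g)) ^ g) Filter.atTop
      (nhds ((3 + Real.sqrt 5) / 2)) := by
  rw [Metric.tendsto_atTop]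
  intro ε hε
  set δ : ℝ := min (ε/9) (1/40) with hδdef
  have hδ0 : 0 < δ := lt_min (by linarith) (by norm_num)
  have hδ40 : δ ≤ 1/40 := min_le_right _ _
  have hδε : 8*δ < ε := by
    have h1 : δ ≤ ε/9 := min_le_left _ _
    linarith
  obtain ⟨N₁, hN₁⟩ := Filter.eventually_atTop.1
    ((tendsto_pow_atTop_atTop_of_one_lt (by linarith : (1:ℝ) < 1+δ)).eventually_ge_atTop 4)
  refine ⟨max (N₁+2) 2, fun g hgN => ?_⟩
  have hgN1 : N₁ + 2 ≤ g := le_trans (le_max_left _ _) hgN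
  have hgN2 : 2 ≤ g := le_trans (le_max_right _ _) hgN
  obtain ⟨m, rfl⟩ : ∃ m, g = m + 2 := ⟨g - 2, by omega⟩
  have h4 : 4 ≤ (1+δ)^(m+1) := hN₁ (m+1) (by omega)
  obtain ⟨hlow, hhigh⟩ := LT15.house_bound m δ hδ0 hδ40 h4
  rw [Real.dist_eq]
  have : |house (LTpoly (m+2)) ^ (m+2) - (3 + Real.sqrt 5)/2| ≤ 8*δ :=
    abs_le.2 ⟨by linarith, by linarith⟩
  exact lt_of_le_of_lt this hδε

end
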